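/- Let (E, C) be a finitely separated graph. The set E⁰_BF of vertices u such that u ⊸ v fails for every branching vertex v is hereditary: if e ∈ E¹ and r(e) ∈ E⁰_BF then s(e) ∈ E⁰_BF. Equivalently, the complement E⁰_Br = {u : u ⊸ v for some branching vertex v} satisfies: s(e) ∈ E⁰_Br implies r(e) ∈ E⁰_Br. -/

import Mathlib

namespace SepGraphStmt

/-- A finitely separated graph: a directed graph with a colouring of the edges
such that edges of the same colour have the same range, and each colour class is finite.
(The colour classes with range `v` form the partition `C_v` of `r⁻¹(v)`.) -/
structure SepGraph (V E Λ : Type) where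
  r : E → V
  s : E → V
  col : E → Λ
  col_range : ∀ e f, col e = col f → r e = r f
  col_finite : ∀ l : Λ, {e : E | col e = l}.Finite

variable {V E Λ : Type}

/-- A letter of the double graph: an edge together with a direction
(`true` = the edge itself, `false` = its formal inverse). -/
abbrev Letter (E : Type) := E × Bool

def src (G : SepGraph V E Λ) (a : Letter E) : V :=
  if a.2 then G.s a.1 else G.r a.1

def rng (G : SepGraph V E Λ) (a : Letter E) : V :=
  if a.2 then G.r a.1 else G.s a.1

/-- Letter `b` may follow letter `a` in an admissible path
(words are written in application order: the first letter of a list is traversed first). -/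
def ok (G : SepGraph V E Λ) (a b : Letter E) : Prop :=
  src G b = rng G a ∧
    (a.2 = false → b.2 = true → b.1 ≠ a.1) ∧
    (a.2 = true → b.2 = false → G.col b.1 ≠ G.col a.1)

def Admissible (G : SepGraph V E Λ) (w : List (Letter E)) : Prop :=
  List.Chain' (ok G) w

/-- Formal inverse of a word. -/
def wInv (w : List (Letter E)) : List (Letter E) :=
  (w.map fun a => (a.1, !a.2)).reverse

/-- The source of the (nonempty) word is `v`. -/
def headIs (G : SepGraph V E Λ) (w : List (Letter E)) (v : V) : Prop :=
  ∀ a ∈ w.head?, src G a = v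

/-- The range of the (nonempty) word is `v`. -/
def lastIs (G : SepGraph V E Λ) (w : List (Letter E)) (v : V) : Prop :=
  ∀ a ∈ w.getLast?, rng G a = v

/-- `w` is an admissible path from `u` to `v`. -/
def IsPath (G : SepGraph V E Λ) (w : List (Letter E)) (u v : V) : Prop :=
  Admissible G w ∧ (w = [] → u = v) ∧ headIs G w u ∧ lastIs G w v

/-- `w` is a closed path based at `v`. -/
def IsClosed (G : SepGraph V E Λ) (w : List (Letter E)) (v : V) : Prop :=
  w ≠ [] ∧ Admissible G w ∧ headIs G w v ∧ lastIs G w v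

/-- `w` is a cycle: a nontrivial path whose square is admissible. -/
def IsCycle (G : SepGraph V E Λ) (w : List (Letter E)) : Prop :=
  w ≠ [] ∧ Admissible G (w ++ w)

/-- `w` is a cycle based at `v`. -/
def CycleAt (G : SepGraph V E Λ) (w : List (Letter E)) (v : V) : Prop :=
  IsCycle G w ∧ headIs G w v

/-- A nontrivial admissible path `w` allows a return: some `βw` is a closed path. -/
def AllowsReturn (G : SepGraph V E Λ) (w : List (Letter E)) : Prop :=
  w ≠ [] ∧ Admissible G w ∧ ∃ b u, IsClosed G (w ++ b) u

/-- A "returning item" at `v`: either an edge in `s⁻¹(v)` allowing a return,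
or a colour class `X ∈ C_v` allowing a return. -/
def RetItem (G : SepGraph V E Λ) (v : V) : E ⊕ Λ → Prop
  | Sum.inl e => G.s e = v ∧ AllowsReturn G [(e, true)]
  | Sum.inr l => ∃ e, G.col e = l ∧ G.r e = v ∧ AllowsReturn G [(e, false)]

/-- `v` is a branching vertex. -/
def Branching (G : SepGraph V E Λ) (v : V) : Prop :=
  ∃ x y z : E ⊕ Λ, x ≠ y ∧ x ≠ z ∧ y ≠ z ∧
    RetItem G v x ∧ RetItem G v y ∧ RetItem G v z

/-- The relation `u ⊸ v`: there is an admissible path `α : u → v` and a cycle `β`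
based at `v` such that `α⁻¹βα` is admissible. -/
def Multimap (G : SepGraph V E Λ) (u v : V) : Prop :=
  ∃ α β, IsPath G α u v ∧ CycleAt G β v ∧ Admissible G (α ++ β ++ wInv α)

/-- A word is positively oriented w.r.t. an orientation `o`. -/
def Pos (o : E → Bool) (w : List (Letter E)) : Prop := ∀ a ∈ w, a.2 = o a.1

/-- A word is negatively oriented w.r.t. an orientation `o`. -/
def Neg (o : E → Bool) (w : List (Letter E)) : Prop := ∀ a ∈ w, a.2 = !o a.1

/-- `o` is an orientation at `v` (Definition of orientation, with (2')). -/
def OrientAt (G : SepGraph V E Λ) (o : E → Bool) (v : V) : Prop :=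
  ((∃ l : Λ, (∃ e, G.col e = l) ∧ (∀ e, (G.r e = v ∧ o e = false) ↔ G.col e = l)) ∧
    ∀ e, G.s e = v → o e = false) ∨
  ((∀ e, G.r e = v → o e = true) ∧
    ∀ e f, G.s e = v → G.s f = v → o e = true → o f = true → e = f)

/-- `o` is a proper orientation at `v`. -/
def ProperOrientAt (G : SepGraph V E Λ) (o : E → Bool) (v : V) : Prop :=
  ((∃ l : Λ, (∃ e, G.col e = l) ∧ (∀ e, (G.r e = v ∧ o e = false) ↔ G.col e = l)) ∧
    ∀ e, G.s e = v → o e = false) ∨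
  ((∀ e, G.r e = v → o e = true) ∧ ∃! e, G.s e = v ∧ o e = true)

/-- `w` is a base-simple closed path at `v`. -/
def BaseSimple (G : SepGraph V E Λ) (w : List (Letter E)) (v : V) : Prop :=
  IsClosed G w v ∧
    ∀ p, p ≠ [] → p.length < w.length → p <+: w → ¬ lastIs G p v



/-! ### Auxiliary machinery for the proof of Statement 12 -/

/-- Inverse of a letter. -/
def linv (a : Letter E) : Letter E := (a.1, !a.2)

/-- The "forbidden successor pattern" of a letter: after `(f, false)` one may not
use `(f, true)`, and after `(f, true)` one may not use any `(g, false)` with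
`col g = col f`. -/
def pat (G : SepGraph V E Λ) (a : Letter E) : E ⊕ Λ :=
  if a.2 then Sum.inr (G.col a.1) else Sum.inl a.1

lemma wInv_eq (w : List (Letter E)) : wInv w = (w.map linv).reverse := rfl

lemma src_linv (G : SepGraph V E Λ) (a : Letter E) : src G (linv a) = rng G a := by
  obtain ⟨f, b⟩ := a; cases b <;> simp [linv, src, rng]

lemma rng_linv (G : SepGraph V E Λ) (a : Letter E) : rng G (linv a) = src G a := by
  obtain ⟨f, b⟩ := a; cases b <;> simp [linv, src, rng]

lemma ok_linv_linv (G : SepGraph V E Λ) {a b : Letter E} (h : ok G a b) :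
    ok G (linv b) (linv a) := by
  obtain ⟨h1, h2, h3⟩ := h
  refine ⟨by rw [src_linv, rng_linv]; exact h1.symm, ?_, ?_⟩
  · intro hb ha
    have hb' : b.2 = true := by simpa [linv] using hb
    have ha' : a.2 = false := by simpa [linv] using ha
    simpa [linv] using (h2 ha' hb').symm
  · intro hb ha
    have hb' : b.2 = false := by simpa [linv] using hb
    have ha' : a.2 = true := by simpa [linv] using ha
    simpa [linv] using (h3 ha' hb').symm

lemma admissible_wInv (G : SepGraph V E Λ) {w : List (Letter E)}
    (h : Admissible G w) : Admissible G (wInv w) := by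
  rw [Admissible, wInv_eq, List.Chain', List.isChain_reverse, List.isChain_map]
  exact List.IsChain.imp (fun a b hab => ok_linv_linv G hab) h

lemma wInv_head? (w : List (Letter E)) :
    (wInv w).head? = w.getLast?.map linv := by
  rw [wInv_eq, List.head?_reverse]
  induction w using List.reverseRecOn with
  | nil => simp
  | append_singleton l a ih => simp

lemma wInv_getLast? (w : List (Letter E)) :
    (wInv w).getLast? = w.head?.map linv := by
  rw [wInv_eq, List.getLast?_reverse, List.head?_map]

lemma head?_append_left {X : Type} {l₁ l₂ : List X} (h : l₁ ≠ []) :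
    (l₁ ++ l₂).head? = l₁.head? := by
  cases l₁ with
  | nil => exact absurd rfl h
  | cons a t => rfl

lemma getLast?_append_right {X : Type} {l₁ l₂ : List X} (h : l₂ ≠ []) :
    (l₁ ++ l₂).getLast? = l₂.getLast? := by
  rw [List.getLast?_append]
  cases hl : l₂.getLast? with
  | none => exact absurd (List.getLast?_eq_none_iff.mp hl) h
  | some d => rfl

lemma ok_true_iff (G : SepGraph V E Λ) {f : E} {a : Letter E} (h : rng G a = G.s f) :
    ok G a (f, true) ↔ pat G a ≠ Sum.inl f := by
  obtain ⟨g, b⟩ := a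
  cases b
  · constructor
    · rintro ⟨-, h2, -⟩ hp
      have : g = f := by simpa [pat] using hp
      exact (h2 rfl rfl) (by simpa using this.symm)
    · intro hp
      refine ⟨by simpa [src] using h.symm, ?_, by simp⟩
      intro _ _ hef
      simp only [] at hef
      exact hp (by simp [pat]; simpa using hef.symm)
  · constructor
    · intro _ hp
      simp [pat] at hp
    · intro _
      exact ⟨by simpa [src] using h.symm, by simp, by simp⟩

lemma ok_false_iff (G : SepGraph V E Λ) {f : E} {a : Letter E} (h : rng G a = G.r f) :
    ok G a (f, false) ↔ pat G a ≠ Sum.inr (G.col f) := by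
  obtain ⟨g, b⟩ := a
  cases b
  · constructor
    · intro _ hp
      simp [pat] at hp
    · intro _
      exact ⟨by simpa [src] using h.symm, by simp, by simp⟩
  · constructor
    · rintro ⟨-, -, h3⟩ hp
      have : G.col g = G.col f := by simpa [pat] using hp
      exact (h3 rfl rfl) this.symm
    · intro hp
      refine ⟨by simpa [src] using h.symm, by simp, ?_⟩
      intro _ _ hcol
      exact hp (by simp [pat]; simpa using hcol.symm)

lemma ok_linv_iff (G : SepGraph V E Λ) {a c : Letter E} (h : rng G a = rng G c) :
    ok G a (linv c) ↔ pat G a ≠ pat G c := by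
  obtain ⟨f, b⟩ := c
  cases b
  · have : rng G a = G.s f := by rw [h]; simp [rng]
    simpa [linv, pat] using ok_true_iff G this
  · have : rng G a = G.r f := by rw [h]; simp [rng]
    simpa [linv, pat] using ok_false_iff G this

/-- Generic construction of `Multimap` from a path, a cycle and the two junctions. -/
lemma route (G : SepGraph V E Λ) (u v : V) (p δ : List (Letter E))
    (hp : IsPath G p u v) (hδ : CycleAt G δ v)
    (hj1 : ∀ x ∈ p.getLast?, ∀ y ∈ δ.head?, ok G x y)
    (hj2 : ∀ x ∈ δ.getLast?, ∀ y ∈ (wInv p).head?, ok G x y) :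
    Multimap G u v := by
  refine ⟨p, δ, hp, hδ, ?_⟩
  have hδadm : Admissible G δ := (List.isChain_append.mp hδ.1.2).1
  have hδne : δ ≠ [] := hδ.1.1
  show List.Chain' (ok G) (p ++ δ ++ wInv p)
  rw [List.append_assoc, List.Chain', List.isChain_append]
  refine ⟨hp.1, List.isChain_append.mpr ⟨hδadm, admissible_wInv G hp.1, hj2⟩, ?_⟩
  intro x hx y hy
  rw [head?_append_left hδne] at hy
  exact hj1 x hx y hy

/-- A closed path whose wrap-around junction is admissible is a cycle. -/
lemma cycleAt_one (G : SepGraph V E Λ) {v : V} {γ : List (Letter E)}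
    (h : IsClosed G γ v)
    (hw : ∀ x ∈ γ.getLast?, ∀ y ∈ γ.head?, ok G x y) : CycleAt G γ v :=
  ⟨⟨h.1, List.isChain_append.mpr ⟨h.2.1, h.2.1, hw⟩⟩, h.2.2.1⟩

/-- Concatenation of two closed paths with admissible junctions is a cycle. -/
lemma cycleAt_two (G : SepGraph V E Λ) {v : V} {γ₁ γ₂ : List (Letter E)}
    (h₁ : IsClosed G γ₁ v) (h₂ : IsClosed G γ₂ v)
    (j12 : ∀ x ∈ γ₁.getLast?, ∀ y ∈ γ₂.head?, ok G x y)
    (j21 : ∀ x ∈ γ₂.getLast?, ∀ y ∈ γ₁.head?, ok G x y) :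
    CycleAt G (γ₁ ++ γ₂) v := by
  have hadm : Admissible G (γ₁ ++ γ₂) :=
    List.isChain_append.mpr ⟨h₁.2.1, h₂.2.1, j12⟩
  refine ⟨⟨by simp [h₁.1], List.isChain_append.mpr ⟨hadm, hadm, ?_⟩⟩, ?_⟩
  · intro x hx y hy
    rw [getLast?_append_right h₂.1] at hx
    rw [head?_append_left h₁.1] at hy
    exact j21 x hx y hy
  · intro a ha
    rw [head?_append_left h₁.1] at ha
    exact h₁.2.2.1 a ha

/-- Route through the formal inverse of `e`. -/
lemma routeE (G : SepGraph V E Λ) (e : E) (v : V) (hse : G.s e = v)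
    (δ : List (Letter E)) (hδ : CycleAt G δ v)
    (h1 : ∀ y ∈ δ.head?, ok G (e, false) y)
    (h2 : ∀ x ∈ δ.getLast?, ok G x (e, true)) :
    Multimap G (G.r e) v := by
  refine route G _ v [(e, false)] δ ?_ hδ ?_ ?_
  · refine ⟨List.isChain_singleton _, fun h => absurd h (by simp), ?_, ?_⟩
    · intro a ha
      obtain rfl : a = (e, false) := by have h' := ha; simp at h'; exact h'.symm
      simp [src]
    · intro a ha
      obtain rfl : a = (e, false) := by have h' := ha; simp at h'; exact h'.symm
      simpa [rng] using hse
  · intro x hx y hy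
    obtain rfl : x = (e, false) := by have h' := hx; simp at h'; exact h'.symm
    exact h1 y hy
  · intro x hx y hy
    obtain rfl : y = (e, true) := by
      have : wInv [(e, false)] = [(e, true)] := rfl
      rw [this] at hy
      have h' := hy; simp at h'; exact h'.symm
    exact h2 x hx

/-- Route through a given path `p` ending with letter `c`. -/
lemma routeC (G : SepGraph V E Λ) (u v : V) (p : List (Letter E)) (c : Letter E)
    (hp : IsPath G p u v) (hc : p.getLast? = some c)
    (δ : List (Letter E)) (hδ : CycleAt G δ v)
    (h1 : ∀ y ∈ δ.head?, ok G c y)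
    (h2 : ∀ x ∈ δ.getLast?, ok G x (linv c)) :
    Multimap G u v := by
  refine route G u v p δ hp hδ ?_ ?_
  · intro x hx y hy
    obtain rfl : x = c := by rw [hc] at hx; have h' := hx; simp at h'; exact h'.symm
    exact h1 y hy
  · intro x hx y hy
    obtain rfl : y = linv c := by
      rw [wInv_head?, hc] at hy
      have h' := hy; simp at h'; exact h'.symm
    exact h2 x hx

/-- Each returning item at `v` yields a closed path at `v` whose first letter is
exactly characterised by `pat`. -/
lemma item_data (G : SepGraph V E Λ) {v : V} {a : E ⊕ Λ} (h : RetItem G v a) :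
    ∃ (ℓ : Letter E) (γ : List (Letter E)),
      γ.head? = some ℓ ∧ IsClosed G γ v ∧
      (∀ w : Letter E, rng G w = v → (ok G w ℓ ↔ pat G w ≠ a)) := by
  cases a with
  | inl f =>
    obtain ⟨hs, -, -, b, u, hcl⟩ := h
    have hlist : (f, true) :: b = [((f, true) : Letter E)] ++ b := rfl
    obtain ⟨hne, hadm, hh, hl⟩ := hcl
    have hu : u = v := by
      have := hh (f, true) (by rw [head?_append_left (by simp)]; rfl)
      simp [src] at this
      rw [← this, hs]
    subst hu
    refine ⟨(f, true), (f, true) :: b, rfl, ⟨by simp, by simpa using hadm,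
      by simpa using hh, by simpa using hl⟩, ?_⟩
    intro w hw
    exact ok_true_iff G (by rw [hw, hs])
  | inr l =>
    obtain ⟨f, hcol, hrf, -, -, b, u, hcl⟩ := h
    obtain ⟨hne, hadm, hh, hl⟩ := hcl
    have hu : u = v := by
      have := hh (f, false) (by rw [head?_append_left (by simp)]; rfl)
      simp [src] at this
      rw [← this, hrf]
    subst hu
    refine ⟨(f, false), (f, false) :: b, rfl, ⟨by simp, by simpa using hadm,
      by simpa using hh, by simpa using hl⟩, ?_⟩
    intro w hw
    rw [← hcol]
    exact ok_false_iff G (by rw [hw, hrf])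

/-- The key branching case: if there is a cycle at a branching vertex `v` whose
first letter is `(e, true)`, then `r e ⊸ v`. -/
lemma caseB (G : SepGraph V E Λ) (e : E) {v : V} (hv : Branching G v)
    (β : List (Letter E)) (hc : CycleAt G β v)
    (hh : β.head? = some ((e, true) : Letter E)) : Multimap G (G.r e) v := by
  obtain ⟨⟨hβne, hβsq⟩, hβhd⟩ := hc
  have hβadm : Admissible G β := (List.isChain_append.mp hβsq).1
  have hwrap : ∀ x ∈ β.getLast?, ∀ y ∈ β.head?, ok G x y :=
    (List.isChain_append.mp hβsq).2.2
  have hse : G.s e = v := by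
    have := hβhd (e, true) (by rw [hh]; rfl)
    simpa [src] using this
  obtain ⟨c, hcLast⟩ : ∃ c, β.getLast? = some c := by
    cases hl : β.getLast? with
    | none => exact absurd (List.getLast?_eq_none_iff.mp hl) hβne
    | some d => exact ⟨d, rfl⟩
  have hwr : ok G c (e, true) := hwrap c hcLast (e, true) (by rw [hh]; rfl)
  have hrngc : rng G c = v := by
    have := hwr.1
    simp [src] at this
    rw [← this, hse]
  have hpcE : pat G c ≠ Sum.inl e := (ok_true_iff G (by rw [hrngc, hse])).mp hwr
  cases β with
  | nil => exact absurd rfl hβne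
  | cons a βt =>
  obtain rfl : a = ((e, true) : Letter E) := by simpa using hh
  cases βt with
  | nil =>
    -- β = [(e,true)] : then r e = s e = v and the multimap is trivial
    obtain rfl : c = ((e, true) : Letter E) := by simpa using hcLast.symm
    have hre : G.r e = v := by simpa [rng] using hrngc
    refine route G _ v [] ((e, true) :: []) ⟨List.isChain_nil, fun _ => hre, ?_, ?_⟩
      ⟨⟨hβne, hβsq⟩, hβhd⟩ ?_ ?_
    · intro x hx; simp at hx
    · intro x hx; simp at hx
    · intro x hx; simp at hx
    · intro x hx y hy
      have hw : wInv ([] : List (Letter E)) = [] := rfl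
      rw [hw] at hy; simp at hy
  | cons b βt' =>
  -- β = (e,true) :: β', β' ≠ []
  have hβ'ne : (b :: βt') ≠ [] := by simp
  have hcLast' : (b :: βt').getLast? = some c := by
    have : ((e, true) :: b :: βt') = [((e, true) : Letter E)] ++ (b :: βt') := rfl
    rw [this, getLast?_append_right hβ'ne] at hcLast
    exact hcLast
  have hokb : ok G (e, true) b := (List.isChain_cons.mp hβadm).1 b rfl
  have hpath : IsPath G (b :: βt') (G.r e) v := by
    refine ⟨hβadm.tail, fun h => absurd h hβ'ne, ?_, ?_⟩
    · intro x hx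
      obtain rfl : x = b := by simpa using hx.symm
      have := hokb.1
      simpa [rng] using this
    · intro x hx
      rw [hcLast'] at hx
      obtain rfl : x = c := by simpa using hx.symm
      exact hrngc
  -- extract two returning items different from `inl e`
  obtain ⟨a₁, a₂, h12, h1e, h2e, hi1, hi2⟩ :
      ∃ a₁ a₂ : E ⊕ Λ, a₁ ≠ a₂ ∧ a₁ ≠ Sum.inl e ∧ a₂ ≠ Sum.inl e ∧
        RetItem G v a₁ ∧ RetItem G v a₂ := by
    obtain ⟨x, y, z, hxy, hxz, hyz, hx, hy, hz⟩ := hv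
    by_cases h1 : x = Sum.inl e
    · exact ⟨y, z, hyz, fun h => hxy (h1.trans h.symm), fun h => hxz (h1.trans h.symm),
        hy, hz⟩
    · by_cases h2 : y = Sum.inl e
      · exact ⟨x, z, hxz, h1, fun h => hyz (h2.trans h.symm), hx, hz⟩
      · exact ⟨x, y, hxy, h1, h2, hx, hy⟩
  obtain ⟨ℓ₁, γ₁, hγ₁h, hγ₁c, hok₁⟩ := item_data G hi1
  obtain ⟨ℓ₂, γ₂, hγ₂h, hγ₂c, hok₂⟩ := item_data G hi2
  obtain ⟨d₁, hd₁⟩ : ∃ d, γ₁.getLast? = some d := by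
    cases hl : γ₁.getLast? with
    | none => exact absurd (List.getLast?_eq_none_iff.mp hl) hγ₁c.1
    | some d => exact ⟨d, rfl⟩
  obtain ⟨d₂, hd₂⟩ : ∃ d, γ₂.getLast? = some d := by
    cases hl : γ₂.getLast? with
    | none => exact absurd (List.getLast?_eq_none_iff.mp hl) hγ₂c.1
    | some d => exact ⟨d, rfl⟩
  have hrd₁ : rng G d₁ = v := hγ₁c.2.2.2 d₁ hd₁
  have hrd₂ : rng G d₂ = v := hγ₂c.2.2.2 d₂ hd₂
  have hef : rng G ((e, false) : Letter E) = v := by simpa [rng] using hse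
  have hpatef : pat G ((e, false) : Letter E) = Sum.inl e := by simp [pat]
  have hoke₁ : ok G (e, false) ℓ₁ :=
    (hok₁ _ hef).mpr (by rw [hpatef]; exact fun h => h1e h.symm)
  have hoke₂ : ok G (e, false) ℓ₂ :=
    (hok₂ _ hef).mpr (by rw [hpatef]; exact fun h => h2e h.symm)
  have hexit₁ : pat G d₁ ≠ Sum.inl e → ok G d₁ (e, true) :=
    fun h => (ok_true_iff G (by rw [hrd₁, hse])).mpr h
  have hexit₂ : pat G d₂ ≠ Sum.inl e → ok G d₂ (e, true) :=
    fun h => (ok_true_iff G (by rw [hrd₂, hse])).mpr h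
  -- helper to convert `∀ x ∈ some _` goals
  have mem1h : ∀ {X : Type} {x y : X}, x ∈ some y → x = y := by
    intro X x y h; simpa using h.symm
  by_cases hA : pat G d₁ ≠ a₁ ∧ pat G d₁ ≠ Sum.inl e
  · -- δ = γ₁, e-route
    refine routeE G e v hse γ₁ (cycleAt_one G hγ₁c ?_) ?_ ?_
    · intro x hx y hy
      obtain rfl := mem1h (hd₁ ▸ hx); obtain rfl := mem1h (hγ₁h ▸ hy)
      exact (hok₁ _ hrd₁).mpr hA.1
    · intro y hy; obtain rfl := mem1h (hγ₁h ▸ hy); exact hoke₁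
    · intro x hx; obtain rfl := mem1h (hd₁ ▸ hx); exact hexit₁ hA.2
  by_cases hB : pat G d₂ ≠ a₂ ∧ pat G d₂ ≠ Sum.inl e
  · -- δ = γ₂, e-route
    refine routeE G e v hse γ₂ (cycleAt_one G hγ₂c ?_) ?_ ?_
    · intro x hx y hy
      obtain rfl := mem1h (hd₂ ▸ hx); obtain rfl := mem1h (hγ₂h ▸ hy)
      exact (hok₂ _ hrd₂).mpr hB.1
    · intro y hy; obtain rfl := mem1h (hγ₂h ▸ hy); exact hoke₂
    · intro x hx; obtain rfl := mem1h (hd₂ ▸ hx); exact hexit₂ hB.2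
  -- now pat d₁ ∈ {a₁, inl e} and pat d₂ ∈ {a₂, inl e}
  by_cases hp1 : pat G d₁ = Sum.inl e
  · by_cases hp2 : pat G d₂ = Sum.inl e
    · -- c-route
      by_cases hpc : pat G c = a₁
      · -- δ = γ₂ ++ γ₁
        refine routeC G _ v (b :: βt') c hpath hcLast' (γ₂ ++ γ₁)
          (cycleAt_two G hγ₂c hγ₁c ?_ ?_) ?_ ?_
        · intro x hx y hy
          obtain rfl := mem1h (hd₂ ▸ hx); obtain rfl := mem1h (hγ₁h ▸ hy)
          exact (hok₁ _ hrd₂).mpr (by rw [hp2]; exact fun h => h1e h.symm)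
        · intro x hx y hy
          obtain rfl := mem1h (hd₁ ▸ hx); obtain rfl := mem1h (hγ₂h ▸ hy)
          exact (hok₂ _ hrd₁).mpr (by rw [hp1]; exact fun h => h2e h.symm)
        · intro y hy
          rw [head?_append_left hγ₂c.1] at hy
          obtain rfl := mem1h (hγ₂h ▸ hy)
          exact (hok₂ _ hrngc).mpr (by rw [hpc]; exact h12)
        · intro x hx
          rw [getLast?_append_right hγ₁c.1] at hx
          obtain rfl := mem1h (hd₁ ▸ hx)
          exact (ok_linv_iff G (by rw [hrd₁, hrngc])).mpr
            (by rw [hp1]; exact fun h => hpcE h.symm)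
      · -- δ = γ₁ ++ γ₂
        refine routeC G _ v (b :: βt') c hpath hcLast' (γ₁ ++ γ₂)
          (cycleAt_two G hγ₁c hγ₂c ?_ ?_) ?_ ?_
        · intro x hx y hy
          obtain rfl := mem1h (hd₁ ▸ hx); obtain rfl := mem1h (hγ₂h ▸ hy)
          exact (hok₂ _ hrd₁).mpr (by rw [hp1]; exact fun h => h2e h.symm)
        · intro x hx y hy
          obtain rfl := mem1h (hd₂ ▸ hx); obtain rfl := mem1h (hγ₁h ▸ hy)
          exact (hok₁ _ hrd₂).mpr (by rw [hp2]; exact fun h => h1e h.symm)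
        · intro y hy
          rw [head?_append_left hγ₁c.1] at hy
          obtain rfl := mem1h (hγ₁h ▸ hy)
          exact (hok₁ _ hrngc).mpr hpc
        · intro x hx
          rw [getLast?_append_right hγ₂c.1] at hx
          obtain rfl := mem1h (hd₂ ▸ hx)
          exact (ok_linv_iff G (by rw [hrd₂, hrngc])).mpr
            (by rw [hp2]; exact fun h => hpcE h.symm)
    · -- pat d₂ = a₂ ; δ = γ₁ ++ γ₂, e-route
      have hp2' : pat G d₂ = a₂ := by
        by_contra h; exact hp2 (by push_neg at hB; exact hB h)
      refine routeE G e v hse (γ₁ ++ γ₂) (cycleAt_two G hγ₁c hγ₂c ?_ ?_) ?_ ?_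
      · intro x hx y hy
        obtain rfl := mem1h (hd₁ ▸ hx); obtain rfl := mem1h (hγ₂h ▸ hy)
        exact (hok₂ _ hrd₁).mpr (by rw [hp1]; exact fun h => h2e h.symm)
      · intro x hx y hy
        obtain rfl := mem1h (hd₂ ▸ hx); obtain rfl := mem1h (hγ₁h ▸ hy)
        exact (hok₁ _ hrd₂).mpr (by rw [hp2']; exact fun h => h12 h.symm)
      · intro y hy
        rw [head?_append_left hγ₁c.1] at hy
        obtain rfl := mem1h (hγ₁h ▸ hy)
        exact hoke₁
      · intro x hx
        rw [getLast?_append_right hγ₂c.1] at hx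
        obtain rfl := mem1h (hd₂ ▸ hx)
        exact hexit₂ (by rw [hp2']; exact h2e)
  · -- pat d₁ = a₁
    have hp1' : pat G d₁ = a₁ := by
      by_contra h; exact hp1 (by push_neg at hA; exact hA h)
    by_cases hp2 : pat G d₂ = Sum.inl e
    · -- δ = γ₂ ++ γ₁, e-route
      refine routeE G e v hse (γ₂ ++ γ₁) (cycleAt_two G hγ₂c hγ₁c ?_ ?_) ?_ ?_
      · intro x hx y hy
        obtain rfl := mem1h (hd₂ ▸ hx); obtain rfl := mem1h (hγ₁h ▸ hy)
        exact (hok₁ _ hrd₂).mpr (by rw [hp2]; exact fun h => h1e h.symm)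
      · intro x hx y hy
        obtain rfl := mem1h (hd₁ ▸ hx); obtain rfl := mem1h (hγ₂h ▸ hy)
        exact (hok₂ _ hrd₁).mpr (by rw [hp1']; exact h12)
      · intro y hy
        rw [head?_append_left hγ₂c.1] at hy
        obtain rfl := mem1h (hγ₂h ▸ hy)
        exact hoke₂
      · intro x hx
        rw [getLast?_append_right hγ₁c.1] at hx
        obtain rfl := mem1h (hd₁ ▸ hx)
        exact hexit₁ (by rw [hp1']; exact h1e)
    · -- pat d₂ = a₂ ; δ = γ₁ ++ γ₂, e-route
      have hp2' : pat G d₂ = a₂ := by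
        by_contra h; exact hp2 (by push_neg at hB; exact hB h)
      refine routeE G e v hse (γ₁ ++ γ₂) (cycleAt_two G hγ₁c hγ₂c ?_ ?_) ?_ ?_
      · intro x hx y hy
        obtain rfl := mem1h (hd₁ ▸ hx); obtain rfl := mem1h (hγ₂h ▸ hy)
        exact (hok₂ _ hrd₁).mpr (by rw [hp1']; exact h12)
      · intro x hx y hy
        obtain rfl := mem1h (hd₂ ▸ hx); obtain rfl := mem1h (hγ₁h ▸ hy)
        exact (hok₁ _ hrd₂).mpr (by rw [hp2']; exact fun h => h12 h.symm)
      · intro y hy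
        rw [head?_append_left hγ₁c.1] at hy
        obtain rfl := mem1h (hγ₁h ▸ hy)
        exact hoke₁
      · intro x hx
        rw [getLast?_append_right hγ₂c.1] at hx
        obtain rfl := mem1h (hd₂ ▸ hx)
        exact hexit₂ (by rw [hp2']; exact h2e)

lemma letter_eq {a : Letter E} {f : E} {b : Bool} (h1 : a.1 = f) (h2 : a.2 = b) :
    a = (f, b) := by
  obtain ⟨x, y⟩ := a
  simp only at h1 h2
  rw [h1, h2]

/-- The set `E⁰_BF` of vertices `u` such that `u ⊸ v` fails for every
branching vertex `v` is hereditary: if `r(e) ∈ E⁰_BF` then `s(e) ∈ E⁰_BF`. -/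
theorem stmt12 {V E Λ : Type} (G : SepGraph V E Λ) (e : E)
    (hr : ∀ v : V, Branching G v → ¬ Multimap G (G.r e) v) :
    ∀ v : V, Branching G v → ¬ Multimap G (G.s e) v := by
  intro v hv hM
  refine hr v hv ?_
  obtain ⟨α, β, hα, hβ, hadm⟩ := hM
  have hβne : β ≠ [] := hβ.1.1
  have hβadm : Admissible G β := (List.isChain_append.mp hβ.1.2).1
  cases α with
  | nil =>
    have hse : G.s e = v := hα.2.1 rfl
    cases β with
    | nil => exact absurd rfl hβne
    | cons hd βt =>
    by_cases hhd : hd = ((e, true) : Letter E)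
    · exact caseB G e hv _ hβ (by simp [hhd])
    · obtain ⟨c, hcL⟩ : ∃ c, (hd :: βt).getLast? = some c := by
        cases hl : (hd :: βt).getLast? with
        | none => exact absurd (List.getLast?_eq_none_iff.mp hl) hβne
        | some d => exact ⟨d, rfl⟩
      have hwrap := (List.isChain_append.mp hβ.1.2).2.2
      have hokchd : ok G c hd := hwrap c hcL hd rfl
      have hsrchd : src G hd = v := hβ.2 hd rfl
      have hrngc : rng G c = v := by rw [← hokchd.1, hsrchd]
      by_cases hcf : c = ((e, false) : Letter E)
      · -- replace β by its inverse, whose first letter is (e, true)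
        refine caseB G e hv (wInv (hd :: βt)) ⟨⟨?_, ?_⟩, ?_⟩ ?_
        · simp [wInv_eq]
        · have hw : wInv (hd :: βt) ++ wInv (hd :: βt)
              = wInv ((hd :: βt) ++ (hd :: βt)) := by
            simp [wInv_eq]
          rw [hw]
          exact admissible_wInv G hβ.1.2
        · intro x hx
          rw [wInv_head?, hcL] at hx
          obtain rfl : x = linv c := by simpa using hx.symm
          rw [src_linv, hrngc]
        · rw [wInv_head?, hcL, hcf]
          rfl
      · -- direct route through (e, false)
        refine routeE G e v hse (hd :: βt) hβ ?_ ?_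
        · intro y hy
          obtain rfl : y = hd := by simpa using hy.symm
          refine ⟨by simpa [rng] using (hsrchd.trans hse.symm), ?_, ?_⟩
          · rintro - h2 h1
            exact hhd (letter_eq h1 h2)
          · intro h; exact absurd h (by simp)
        · intro x hx
          rw [hcL] at hx
          obtain rfl : x = c := by simpa using hx.symm
          refine ⟨by simp [src, hse, hrngc], ?_, ?_⟩
          · rintro h2 - h1
            exact hcf (letter_eq h1.symm h2)
          · intro _ h; exact absurd h (by simp)
  | cons a αt =>
    have hJ := List.isChain_append.mp hadm
    have hJ1 := (List.isChain_append.mp hJ.1).2.2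
    have hJ2 := hJ.2.2
    by_cases ha : a = ((e, true) : Letter E)
    · -- first letter of α cancels with e⁻¹ : drop it
      subst ha
      refine route G _ v αt β ?_ hβ ?_ ?_
      · refine ⟨hα.1.tail, ?_, ?_, ?_⟩
        · intro h
          have := hα.2.2.2 (e, true) (by rw [h]; rfl)
          simpa [rng] using this
        · intro x hx
          cases αt with
          | nil => simp at hx
          | cons b t =>
            have hxb : x = b := by simpa using hx.symm
            have h1 := ((List.isChain_cons.mp hα.1).1 b rfl).1
            rw [hxb]
            simpa [rng] using h1
        · intro x hx
          apply hα.2.2.2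
          have hne : αt ≠ [] := by intro h; rw [h] at hx; simp at hx
          have hl : (((e, true) : Letter E) :: αt) = [((e, true) : Letter E)] ++ αt := rfl
          rw [hl, getLast?_append_right hne]
          exact hx
      · intro x hx y hy
        have hne : αt ≠ [] := by intro h; rw [h] at hx; simp at hx
        apply hJ1 x _ y hy
        have hl : (((e, true) : Letter E) :: αt) = [((e, true) : Letter E)] ++ αt := rfl
        rw [hl, getLast?_append_right hne]
        exact hx
      · intro x hx y hy
        apply hJ2 x _ y _
        · rw [getLast?_append_right hβne]
          exact hx
        · rw [wInv_head?] at hy ⊢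
          have hne : αt ≠ [] := by
            intro h; rw [h] at hy; simp at hy
          have hl : (((e, true) : Letter E) :: αt) = [((e, true) : Letter E)] ++ αt := rfl
          rw [hl, getLast?_append_right hne]
          exact hy
    · -- no cancellation: prepend (e, false) to α
      have hsrca : src G a = G.s e := hα.2.2.1 a rfl
      have hokfa : ok G (e, false) a := by
        refine ⟨by simpa [rng] using hsrca, ?_, ?_⟩
        · rintro - h2 h1
          exact ha (letter_eq h1 h2)
        · intro h; exact absurd h (by simp)
      refine route G _ v ((e, false) :: a :: αt) β ?_ hβ ?_ ?_
      · refine ⟨List.isChain_cons.mpr ⟨?_, hα.1⟩, fun h => absurd h (by simp), ?_, ?_⟩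
        · intro y hy
          obtain rfl : y = a := by simpa using hy.symm
          exact hokfa
        · intro x hx
          obtain rfl : x = ((e, false) : Letter E) := by simpa using hx.symm
          simp [src]
        · intro x hx
          apply hα.2.2.2
          have hl : (((e, false) : Letter E) :: a :: αt)
              = [((e, false) : Letter E)] ++ (a :: αt) := rfl
          rw [hl, getLast?_append_right (by simp)] at hx
          exact hx
      · intro x hx y hy
        apply hJ1 x _ y hy
        have hl : (((e, false) : Letter E) :: a :: αt)
            = [((e, false) : Letter E)] ++ (a :: αt) := rfl
        rw [hl, getLast?_append_right (by simp)] at hx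
        exact hx
      · intro x hx y hy
        apply hJ2 x _ y _
        · rw [getLast?_append_right hβne]
          exact hx
        · rw [wInv_head?] at hy ⊢
          have hl : (((e, false) : Letter E) :: a :: αt)
              = [((e, false) : Letter E)] ++ (a :: αt) := rfl
          rw [hl, getLast?_append_right (by simp)] at hy
          exact hy

end SepGraphStmt
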